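/- arXiv:2112.02528 — 9 statements merged into one kernel-verified Lean document; each statement's English description precedes it below -/
import Mathlib

section
/- Let F be a field with a_0, a_1, a_2 ∈ F, a_0 ≠ 0. Then in F[[t]], (a_0 + a_1 t + a_2 t^2)^{-1} = Σ_{j≥0} c_j t^j where c_j = Σ_{k=0}^{⌊j/2⌋} (-1)^{j-k} binom(j-k, k) a_0^{-j+k-1} a_1^{j-2k} a_2^k. -/
open Finset PowerSeries

section
variable {F : Type*} [Field F] (a0 a1 a2 : F)

private def qterm (j k : ℕ) : F :=
  (-1) ^ (j - k) * (Nat.choose (j - k) k : F) * a0⁻¹ ^ (j - k + 1) * a1 ^ (j - 2 * k) * a2 ^ k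

private def qc (j : ℕ) : F := ∑ k ∈ Finset.range (j / 2 + 1), qterm a0 a1 a2 j k

private lemma qc_eq (j N : ℕ) (h : j ≤ N) :
    qc a0 a1 a2 j = ∑ k ∈ Finset.range (N + 1), qterm a0 a1 a2 j k := by
  refine Finset.sum_subset (Finset.range_subset_range.2 (by omega)) ?_
  intro k hk hk'
  simp only [Finset.mem_range] at hk hk'
  have : Nat.choose (j - k) k = 0 := Nat.choose_eq_zero_of_lt (by omega)
  simp [qterm, this]

private lemma qrec (h0 : a0 ≠ 0) (n : ℕ) :
    a0 * qc a0 a1 a2 (n + 2) + a1 * qc a0 a1 a2 (n + 1) + a2 * qc a0 a1 a2 n = 0 := by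
  rw [qc_eq a0 a1 a2 (n+2) (n+3) (by omega), qc_eq a0 a1 a2 (n+1) (n+3) (by omega),
    qc_eq a0 a1 a2 n (n+2) (by omega)]
  have hshift : a2 * ∑ k ∈ Finset.range (n + 3), qterm a0 a1 a2 n k
      = ∑ k ∈ Finset.range (n + 4),
          (if k = 0 then 0 else a2 * qterm a0 a1 a2 n (k - 1)) := by
    rw [Finset.sum_range_succ' (fun k => if k = 0 then (0:F) else a2 * qterm a0 a1 a2 n (k-1)) (n+3)]
    simp [Finset.mul_sum]
  rw [Finset.mul_sum, Finset.mul_sum, hshift, ← Finset.sum_add_distrib, ← Finset.sum_add_distrib]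
  refine Finset.sum_eq_zero fun k hk => ?_
  simp only [Finset.mem_range] at hk
  rcases Nat.eq_zero_or_pos k with rfl | hkpos
  · simp only [if_pos rfl, ↓reduceIte, add_zero, qterm]
    simp only [Nat.sub_zero, Nat.mul_zero, Nat.choose_zero_right, Nat.cast_one, pow_zero]
    have h1 : (n + 3 : ℕ) = (n + 2) + 1 := rfl
    rw [h1, pow_succ]
    field_simp
    ring_nf
    field_simp
    ring
  · rw [if_neg (by omega)]
    obtain ⟨k', rfl⟩ : ∃ k', k = k' + 1 := ⟨k - 1, by omega⟩
    rcases le_or_gt (2 * (k' + 1)) (n + 1) with hle | hgt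
    · -- genuine case: n = 2k' + d' + 1
      obtain ⟨d', hd⟩ : ∃ d', n = 2 * k' + d' + 1 := ⟨n - 1 - 2 * k', by omega⟩
      subst hd
      simp only [qterm, Nat.add_sub_cancel]
      rw [show 2*k'+d'+1+2 - (k'+1) = k'+d'+2 by omega,
        show 2*k'+d'+1+1 - (k'+1) = k'+d'+1 by omega,
        show 2*k'+d'+1 - k' = k'+d'+1 by omega,
        show 2*k'+d'+1+2 - 2*(k'+1) = d'+1 by omega,
        show 2*k'+d'+1+1 - 2*(k'+1) = d' by omega,
        show 2*k'+d'+1 - 2*k' = d'+1 by omega,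
        show k'+d'+2 = (k'+d'+1)+1 from rfl,
        Nat.choose_succ_succ (k'+d'+1) k']
      push_cast
      rw [show (k'+d'+1)+1+1 = (k'+d'+1)+2 from rfl]
      field_simp
      ring_nf
      field_simp
      ring
    · rcases Nat.eq_or_lt_of_le hgt with heq | hgt2
      · -- 2k = n+2
        have hk2 : n = 2 * k' := by omega
        subst hk2
        simp only [qterm, Nat.add_sub_cancel]
        rw [show 2*k'+2 - (k'+1) = k'+1 by omega,
          show 2*k'+1 - (k'+1) = k' by omega,
          show 2*k' - k' = k' by omega,
          show 2*k'+2 - 2*(k'+1) = 0 by omega,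
          show 2*k'+1 - 2*(k'+1) = 0 by omega,
          show 2*k' - 2*k' = 0 by omega]
        have : Nat.choose k' (k' + 1) = 0 := Nat.choose_eq_zero_of_lt (by omega)
        simp only [this, Nat.choose_self, Nat.cast_zero, Nat.cast_one, pow_zero]
        rw [show k'+1+1 = k'+2 from rfl]
        field_simp
        ring_nf
        field_simp
        ring
      · -- all choose vanish
        have h1 : Nat.choose (n+1 - k') (k'+1) = 0 := Nat.choose_eq_zero_of_lt (by omega)
        have h2 : Nat.choose (n - k') (k'+1) = 0 := Nat.choose_eq_zero_of_lt (by omega)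
        have h3 : Nat.choose (n - k') k' = 0 := Nat.choose_eq_zero_of_lt (by omega)
        simp [qterm, h1, h2, h3]

end


/-- In `F⟦t⟧` over a field `F`, for `a₀ ≠ 0`:
`(a₀ + a₁ t + a₂ t²)⁻¹ = ∑_j c_j t^j` with
`c_j = ∑_{k=0}^{⌊j/2⌋} (-1)^{j-k} C(j-k, k) a₀^{-j+k-1} a₁^{j-2k} a₂^k`. -/
theorem inv_quadratic_powerSeries (F : Type*) [Field F] (a0 a1 a2 : F) (h0 : a0 ≠ 0) :
    (PowerSeries.C (R := F) a0 + PowerSeries.C (R := F) a1 * PowerSeries.X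
        + PowerSeries.C (R := F) a2 * PowerSeries.X ^ 2)⁻¹ =
      PowerSeries.mk (fun j => ∑ k ∈ Finset.range (j / 2 + 1),
        (-1) ^ (j - k) * (Nat.choose (j - k) k : F) *
          a0⁻¹ ^ (j - k + 1) * a1 ^ (j - 2 * k) * a2 ^ k) := by
  have hmk : (PowerSeries.mk (fun j => ∑ k ∈ Finset.range (j / 2 + 1),
        (-1) ^ (j - k) * (Nat.choose (j - k) k : F) *
          a0⁻¹ ^ (j - k + 1) * a1 ^ (j - 2 * k) * a2 ^ k))
      = PowerSeries.mk (qc a0 a1 a2) := rfl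
  rw [hmk, PowerSeries.inv_eq_iff_mul_eq_one (by simp [h0])]
  have hprod : PowerSeries.mk (qc a0 a1 a2) * (PowerSeries.C (R := F) a0 + PowerSeries.C (R := F) a1 * PowerSeries.X
        + PowerSeries.C (R := F) a2 * PowerSeries.X ^ 2)
      = PowerSeries.C (R := F) a0 * PowerSeries.mk (qc a0 a1 a2)
        + PowerSeries.C (R := F) a1 * (PowerSeries.X ^ 1 * PowerSeries.mk (qc a0 a1 a2))
        + PowerSeries.C (R := F) a2 * (PowerSeries.X ^ 2 * PowerSeries.mk (qc a0 a1 a2)) := by ring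
  rw [hprod]
  ext n
  simp only [map_add, PowerSeries.coeff_C_mul, PowerSeries.coeff_X_pow_mul',
    PowerSeries.coeff_mk, PowerSeries.coeff_one, mul_ite, mul_zero]
  match n with
  | 0 =>
    simp [qc, qterm]
    exact mul_inv_cancel₀ h0
  | 1 =>
    simp only [if_pos (by omega : (1:ℕ) ≤ 1), if_neg (by omega : ¬ (2:ℕ) ≤ 1),
      if_neg (by omega : ¬ (1:ℕ) = 0), add_zero]
    simp [qc, qterm]
    field_simp
    ring
  | (n+2) =>
    simp only [if_pos (by omega : (1:ℕ) ≤ n+2), if_pos (by omega : (2:ℕ) ≤ n+2),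
      if_neg (by omega : ¬ n+2 = 0)]
    have := qrec a0 a1 a2 h0 n
    rw [show n+2-1 = n+1 from rfl, show n+2-2 = n from rfl]
    linear_combination qrec a0 a1 a2 h0 n
end

section
/- Let F be a field of characteristic zero, P(t) = a_m t^m + ... + a_0 with a_0 ≠ 0, a_m ≠ 0, m ≥ 1, and let (c_j) be the coefficients of P(t)^{-1} in F[[t]]. Let f = Σ f_i x^i ∈ F[[x]]. If for every k there exists N such that c_j f_{k+j} = 0 for all j > N, then f is a polynomial. -/
private theorem polyconv_key {F : Type*} [Field F] {m : ℕ} {a c : ℕ → F}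
    (hc : PowerSeries.mk c *
      (∑ i ∈ Finset.range (m + 1), PowerSeries.monomial i (a i)) = 1)
    (n : ℕ) (hn : m ≤ n) (hn1 : n ≠ 0) :
    ∑ q ∈ Finset.range (m+1), c (n - q) * a q = 0 := by
  have h := congrArg (PowerSeries.coeff n) hc
  rw [PowerSeries.coeff_mul] at h
  simp only [PowerSeries.coeff_monomial, PowerSeries.coeff_one, map_sum, PowerSeries.coeff_mk,
    Finset.mul_sum, mul_ite, mul_zero, Finset.sum_ite_eq, Finset.mem_range] at h
  rw [← Finset.Nat.sum_antidiagonal_swap, Finset.Nat.sum_antidiagonal_eq_sum_range_succ_mk] at h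
  simp only [Prod.swap, if_neg hn1] at h
  calc ∑ q ∈ Finset.range (m+1), c (n - q) * a q
      = ∑ q ∈ Finset.range (m+1), if q < m + 1 then c (n - q) * a q else 0 := by
        refine Finset.sum_congr rfl fun x hx => ?_
        rw [if_pos (Finset.mem_range.1 hx)]
    _ = ∑ x ∈ Finset.range n.succ, if x < m + 1 then c (n - x) * a x else 0 := by
        refine Finset.sum_subset (Finset.range_subset_range.2 (by omega)) fun x _ hx2 => ?_
        rw [if_neg (by simpa using hx2)]
    _ = 0 := h

private theorem polyconv_c0 {F : Type*} [Field F] {m : ℕ} {a c : ℕ → F}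
    (hc : PowerSeries.mk c *
      (∑ i ∈ Finset.range (m + 1), PowerSeries.monomial i (a i)) = 1) :
    c 0 * a 0 = 1 := by
  have h := congrArg (PowerSeries.coeff 0) hc
  rw [PowerSeries.coeff_mul] at h
  simp only [PowerSeries.coeff_monomial, PowerSeries.coeff_one, map_sum, PowerSeries.coeff_mk,
    Finset.mul_sum, mul_ite, mul_zero, Finset.sum_ite_eq, Finset.mem_range,
    Finset.Nat.antidiagonal_zero, Finset.sum_singleton] at h
  simpa using h

/-- `c` has no `m` consecutive zeros. -/
private theorem polyconv_window {F : Type*} [Field F] {m : ℕ} (hm : 1 ≤ m) {a c : ℕ → F}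
    (hmne : a m ≠ 0)
    (hc : PowerSeries.mk c *
      (∑ i ∈ Finset.range (m + 1), PowerSeries.monomial i (a i)) = 1) :
    ∀ n : ℕ, ∃ j, n ≤ j ∧ j < n + m ∧ c j ≠ 0 := by
  intro n
  by_contra hcon
  push_neg at hcon
  -- hcon : ∀ j, n ≤ j → j < n + m → c j = 0
  -- propagate backwards
  have main : ∀ n : ℕ, (∀ j, n ≤ j → j < n + m → c j = 0) → False := by
    intro n
    induction n with
    | zero =>
      intro hz
      have h1 := polyconv_c0 hc
      rw [hz 0 le_rfl (by omega), zero_mul] at h1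
      exact zero_ne_one h1
    | succ n ih =>
      intro hz
      apply ih
      have hcn : c n = 0 := by
        have hk := polyconv_key hc (n + m) (by omega) (by omega)
        have : ∀ q ∈ Finset.range (m+1), q ≠ m → c (n + m - q) * a q = 0 := by
          intro q hq hqm
          have hq' : q < m + 1 := Finset.mem_range.1 hq
          have : c (n + m - q) = 0 := hz _ (by omega) (by omega)
          rw [this, zero_mul]
        rw [Finset.sum_eq_single_of_mem m (Finset.self_mem_range_succ m) this] at hk
        simp only [Nat.add_sub_cancel] at hk
        exact (mul_eq_zero.1 hk).resolve_right hmne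
      intro j hj1 hj2
      rcases eq_or_lt_of_le hj1 with h | h
      · exact h ▸ hcn
      · exact hz j h (by omega)
  exact main n hcon



/-- Convergence criterion: with `c` the coefficients of `P(t)⁻¹` (`a 0 ≠ 0`, `a m ≠ 0`,
`m ≥ 1`), if for every `k` the products `c j * f_{k+j}` vanish for all large `j`,
then the power series `f` is a polynomial. -/
theorem polynomial_of_coeffwise_convergence (F : Type*) [Field F] [CharZero F]
    (m : ℕ) (hm : 1 ≤ m) (a : ℕ → F) (h0 : a 0 ≠ 0) (hmne : a m ≠ 0) (c : ℕ → F)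
    (hc : PowerSeries.mk c *
      (∑ i ∈ Finset.range (m + 1), PowerSeries.monomial i (a i)) = 1)
    (f : PowerSeries F)
    (hconv : ∀ k : ℕ, ∃ N : ℕ, ∀ j > N, c j * PowerSeries.coeff (k + j) f = 0) :
    ∃ N : ℕ, ∀ i ≥ N, PowerSeries.coeff i f = 0 := by
  choose Nk hNk using hconv
  set M := (Finset.range m).sup Nk with hM
  refine ⟨M + m, fun i hi => ?_⟩
  obtain ⟨j, hj1, hj2, hjne⟩ := polyconv_window hm hmne hc (i - m + 1)
  set k := i - j with hk
  have hkm : k < m := by omega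
  have hkj : k + j = i := by omega
  have hjN : j > Nk k := by
    have : Nk k ≤ M := Finset.le_sup (Finset.mem_range.2 hkm)
    omega
  have := hNk k j hjN
  rw [hkj] at this
  exact (mul_eq_zero.1 this).resolve_left hjne
end

section
/- Let F be a field of characteristic zero equipped with a non-Archimedean absolute value |·|, and let a_0, ..., a_m ∈ F with |a_0| = 1 and |a_i| < 1 for 1 ≤ i ≤ m. If a formal power series y = Σ y_k x^k with all |y_k| ≤ 1 satisfies the homogeneous equation a_m y^{(m)} + ... + a_1 y' + a_0 y = 0 (formal derivatives in F[[x]]), then y = 0. -/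
open PowerSeries in
private lemma coeff_iter_derivativeFun {F : Type*} [CommRing F] (y : PowerSeries F) :
    ∀ i k : ℕ, coeff k (derivativeFun^[i] y) =
      ((k + i).descFactorial i : F) * coeff (k + i) y := by
  intro i
  induction i with
  | zero => intro k; simp
  | succ i ih =>
    intro k
    rw [Function.iterate_succ_apply', (by intro f n; exact coeff_derivative f n :
      ∀ (f : PowerSeries F) (n : ℕ), coeff n (derivativeFun f) = coeff (n + 1) f * (n + 1)), ih]
    have h1 : k + 1 + i = k + (i + 1) := by omega
    have h2 : (k + (i + 1)).descFactorial (i + 1) =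
        (k + 1) * (k + 1 + i).descFactorial i := by
      have h3 : k + (i + 1) = k + 1 + i := by omega
      rw [h3, Nat.descFactorial_succ]
      congr 1
      omega
    rw [h1, h2]
    push_cast
    ring

private lemma nna_sum {F : Type*} [NormedField F]
    (hna : ∀ x y : F, ‖x + y‖ ≤ max ‖x‖ ‖y‖) {ι : Type*} (s : Finset ι) (f : ι → F)
    (c : ℝ) (hc : 0 ≤ c) (h : ∀ i ∈ s, ‖f i‖ ≤ c) : ‖∑ i ∈ s, f i‖ ≤ c := by
  classical
  induction s using Finset.induction with
  | empty => simpa using hc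
  | insert _ _ hx ih =>
    rw [Finset.sum_insert hx]
    refine le_trans (hna _ _) (max_le (h _ (Finset.mem_insert_self _ _)) ?_)
    exact ih fun i hi => h i (Finset.mem_insert_of_mem hi)

private lemma nna_nat {F : Type*} [NormedField F]
    (hna : ∀ x y : F, ‖x + y‖ ≤ max ‖x‖ ‖y‖) (n : ℕ) : ‖(n : F)‖ ≤ 1 := by
  induction n with
  | zero => simp
  | succ n ih =>
    push_cast
    exact le_trans (hna _ _) (max_le ih (by simp))

/-- Over a non-Archimedean valued field of characteristic zero, with `|a 0| = 1` and
`|a i| < 1` for `1 ≤ i ≤ m`, any solution `y ∈ K⟦x⟧` (all coefficients of norm at most 1)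
of the homogeneous equation `a_m y^{(m)} + ... + a_1 y' + a_0 y = 0` is zero. -/
theorem homogeneous_nonarchimedean_unique (F : Type*) [NormedField F] [CharZero F]
    (hna : ∀ x y : F, ‖x + y‖ ≤ max ‖x‖ ‖y‖)
    (m : ℕ) (a : ℕ → F) (h0 : ‖a 0‖ = 1) (ha : ∀ i, 1 ≤ i → i ≤ m → ‖a i‖ < 1)
    (y : PowerSeries F) (hy : ∀ k, ‖PowerSeries.coeff k y‖ ≤ 1)
    (heq : ∑ i ∈ Finset.range (m + 1),
      PowerSeries.C (a i) * (PowerSeries.derivativeFun^[i] y) = 0) :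
    y = 0 := by
  classical
  set bn : NNReal := (Finset.Icc 1 m).sup fun i => ‖a i‖₊ with hbn
  have hb1 : bn < 1 := by
    rw [hbn, Finset.sup_lt_iff (by norm_num : (0 : NNReal) < 1)]
    intro i hi
    rw [Finset.mem_Icc] at hi
    exact_mod_cast (by exact_mod_cast ha i hi.1 hi.2 : ‖a i‖₊ < 1)
  have hb0 : (0 : ℝ) ≤ (bn : ℝ) := bn.coe_nonneg
  -- recursion
  have hrec : ∀ k : ℕ, a 0 * PowerSeries.coeff k y =
      -∑ i ∈ Finset.Icc 1 m, a i * (((k + i).descFactorial i : F) *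
        PowerSeries.coeff (k + i) y) := by
    intro k
    have h := congrArg (PowerSeries.coeff k) heq
    rw [map_sum, map_zero] at h
    have hsplit : Finset.range (m + 1) = insert 0 (Finset.Icc 1 m) := by
      ext i; simp [Finset.mem_range, Finset.mem_Icc]; omega
    rw [hsplit, Finset.sum_insert (by simp)] at h
    simp only [PowerSeries.coeff_C_mul, coeff_iter_derivativeFun] at h
    simp only [Function.iterate_zero, id_eq, add_zero, Nat.descFactorial_zero,
      Nat.cast_one, one_mul] at h
    exact eq_neg_of_add_eq_zero_left h
  -- main bound by induction on n
  have hbound : ∀ n k, ‖PowerSeries.coeff k y‖ ≤ (bn : ℝ) ^ n := by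
    intro n
    induction n with
    | zero => simpa using hy
    | succ n ih =>
      intro k
      have h1 : ‖a 0 * PowerSeries.coeff k y‖ = ‖PowerSeries.coeff k y‖ := by
        rw [norm_mul, h0, one_mul]
      rw [← h1, hrec k, norm_neg]
      refine nna_sum hna _ _ _ (by positivity) ?_
      intro i hi
      rw [Finset.mem_Icc] at hi
      rw [norm_mul, norm_mul]
      have hai : ‖a i‖ ≤ (bn : ℝ) := by
        have : ‖a i‖₊ ≤ bn := Finset.le_sup (f := fun i => ‖a i‖₊) (Finset.mem_Icc.2 hi)
        exact_mod_cast this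
      have hd : ‖(((k + i).descFactorial i : ℕ) : F)‖ ≤ 1 := nna_nat hna _
      calc ‖a i‖ * (‖(((k + i).descFactorial i : ℕ) : F)‖ * ‖PowerSeries.coeff (k + i) y‖)
          ≤ (bn : ℝ) * (1 * (bn : ℝ) ^ n) := by
            refine mul_le_mul hai ?_ (by positivity) hb0
            exact mul_le_mul hd (ih _) (norm_nonneg _) one_pos.le
        _ = (bn : ℝ) ^ (n + 1) := by ring
  -- conclude
  ext k
  have hk : ‖PowerSeries.coeff k y‖ ≤ 0 := by
    have htend : Filter.Tendsto (fun n => (bn : ℝ) ^ n) Filter.atTop (nhds 0) :=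
      tendsto_pow_atTop_nhds_zero_of_lt_one hb0 (by exact_mod_cast hb1)
    exact ge_of_tendsto' htend fun n => hbound n k
  simpa using le_antisymm hk (norm_nonneg _)
end

section
/- Let F be a field of characteristic zero with a non-Archimedean absolute value, K its valuation ring, and a_0, ..., a_m ∈ K with |a_0| = 1, |a_i| < 1 for 1 ≤ i ≤ m. Then for any f ∈ K[[x]], the equation a_m w^{(m)} + ... + a_1 w' + a_0 w = f has at most one solution w ∈ K[[x]]. -/
open PowerSeries Finset

private lemma coeff_iter_deriv' (F : Type*) [CommRing F] (g : PowerSeries F) (i k : ℕ) :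
    PowerSeries.coeff k (PowerSeries.derivativeFun^[i] g) =
      ((∏ j ∈ Finset.range i, (k + 1 + j) : ℕ) : F) * PowerSeries.coeff (k + i) g := by
  induction i generalizing g with
  | zero => simp
  | succ i ih =>
    rw [Function.iterate_succ_apply, ih,
      show PowerSeries.coeff (k + i) g.derivativeFun = PowerSeries.coeff (k + i) (PowerSeries.derivative F g) from rfl,
      coeff_derivative, Finset.prod_range_succ,
      show k + (i + 1) = k + i + 1 from rfl]
    push_cast
    ring

private lemma norm_nat_le_one' (F : Type*) [NormedField F]
    (hna : ∀ x y : F, ‖x + y‖ ≤ max ‖x‖ ‖y‖) (n : ℕ) : ‖(n : F)‖ ≤ 1 := by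
  induction n with
  | zero => simp
  | succ n ih =>
    push_cast
    exact (hna n 1).trans (by simp [ih])

private lemma norm_sum_le_of_le' (F : Type*) [NormedField F]
    (hna : ∀ x y : F, ‖x + y‖ ≤ max ‖x‖ ‖y‖) {ι : Type*} (s : Finset ι) (g : ι → F)
    (B : ℝ) (hB : 0 ≤ B) (h : ∀ i ∈ s, ‖g i‖ ≤ B) : ‖∑ i ∈ s, g i‖ ≤ B := by
  induction s using Finset.cons_induction with
  | empty => simpa using hB
  | cons x s hx ih =>
    rw [Finset.sum_cons]
    exact (hna _ _).trans (max_le (h x (Finset.mem_cons_self x s))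
      (ih fun i hi => h i (Finset.mem_cons_of_mem hi)))

/-- Over a non-Archimedean valued field of characteristic zero with valuation ring
`K = {s : ‖s‖ ≤ 1}`, with `‖a 0‖ = 1` and `‖a i‖ < 1` for `1 ≤ i ≤ m`, the equation
`a_m w^{(m)} + ... + a_0 w = f` has at most one solution in `K⟦x⟧`. -/
theorem nonarchimedean_uniqueness (F : Type*) [NormedField F] [CharZero F]
    (hna : ∀ x y : F, ‖x + y‖ ≤ max ‖x‖ ‖y‖)
    (m : ℕ) (a : ℕ → F) (h0 : ‖a 0‖ = 1) (ha : ∀ i, 1 ≤ i → i ≤ m → ‖a i‖ < 1)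
    (f w₁ w₂ : PowerSeries F)
    (hw₁ : ∀ k, ‖PowerSeries.coeff k w₁‖ ≤ 1)
    (hw₂ : ∀ k, ‖PowerSeries.coeff k w₂‖ ≤ 1)
    (heq₁ : ∑ i ∈ Finset.range (m + 1),
      PowerSeries.C (a i) * (PowerSeries.derivativeFun^[i] w₁) = f)
    (heq₂ : ∑ i ∈ Finset.range (m + 1),
      PowerSeries.C (a i) * (PowerSeries.derivativeFun^[i] w₂) = f) :
    w₁ = w₂ := by
  set c : ℕ → F := fun k => PowerSeries.coeff k w₁ - PowerSeries.coeff k w₂ with hc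
  -- the coefficient recurrence
  have key : ∀ k : ℕ, a 0 * c k =
      -∑ i ∈ Finset.range m,
        a (i + 1) * (((∏ j ∈ Finset.range (i + 1), (k + 1 + j) : ℕ) : F) * c (k + (i + 1))) := by
    intro k
    have h := congrArg (PowerSeries.coeff k) (heq₁.trans heq₂.symm)
    rw [map_sum, map_sum] at h
    simp only [PowerSeries.coeff_C_mul, coeff_iter_deriv'] at h
    have h' : ∑ i ∈ Finset.range (m + 1),
        a i * (((∏ j ∈ Finset.range i, (k + 1 + j) : ℕ) : F) * c (k + i)) = 0 := by
      simp only [hc, mul_sub]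
      rw [Finset.sum_sub_distrib, sub_eq_zero]
      convert h using 2 <;> ring
    rw [Finset.sum_range_succ'] at h'
    simp only [Finset.prod_range_zero, Nat.cast_one, one_mul, add_zero] at h'
    linear_combination h'
  -- the bound ρ
  set ρ : ℝ := (((Finset.range m).sup fun i => ‖a (i + 1)‖₊ : NNReal) : ℝ) with hρ
  have hρ0 : 0 ≤ ρ := NNReal.coe_nonneg _
  have hρ1 : ρ < 1 := by
    rw [hρ, show (1 : ℝ) = ((1 : NNReal) : ℝ) from rfl, NNReal.coe_lt_coe]
    refine Finset.sup_lt_iff (show (⊥ : NNReal) < 1 by norm_num) |>.mpr ?_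
    intro i hi
    have := ha (i + 1) (by omega) (by simp at hi; omega)
    simpa [← NNReal.coe_lt_coe] using this
  have hρi : ∀ i, i < m → ‖a (i + 1)‖ ≤ ρ := by
    intro i hi
    rw [hρ, show ‖a (i+1)‖ = ((‖a (i+1)‖₊ : NNReal) : ℝ) from rfl, NNReal.coe_le_coe]
    exact Finset.le_sup (f := fun i => ‖a (i + 1)‖₊) (Finset.mem_range.mpr hi)
  -- main induction
  have bound : ∀ N k, ‖c k‖ ≤ ρ ^ N := by
    intro N
    induction N with
    | zero =>
      intro k
      simp only [pow_zero, hc]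
      rw [sub_eq_add_neg]
      exact (hna _ _).trans (max_le (hw₁ k) (by simpa using hw₂ k))
    | succ N ih =>
      intro k
      have : ‖c k‖ = ‖a 0 * c k‖ := by rw [norm_mul, h0, one_mul]
      rw [this, key k, norm_neg]
      apply norm_sum_le_of_le' F hna _ _ _ (pow_nonneg hρ0 _)
      intro i hi
      rw [norm_mul, norm_mul, pow_succ']
      have h1 : ‖a (i + 1)‖ ≤ ρ := hρi i (Finset.mem_range.mp hi)
      have h2 : ‖((∏ j ∈ Finset.range (i + 1), (k + 1 + j) : ℕ) : F)‖ ≤ 1 :=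
        norm_nat_le_one' F hna _
      have h3 : ‖c (k + (i + 1))‖ ≤ ρ ^ N := ih _
      calc ‖a (i + 1)‖ * (‖((∏ j ∈ Finset.range (i + 1), (k + 1 + j) : ℕ) : F)‖ * ‖c (k + (i + 1))‖)
          ≤ ρ * (1 * ρ ^ N) := by
            apply mul_le_mul h1 _ (by positivity) hρ0
            exact mul_le_mul h2 h3 (norm_nonneg _) zero_le_one
        _ = ρ * ρ ^ N := by ring
  have hzero : ∀ k, c k = 0 := by
    intro k
    have htend : Filter.Tendsto (fun N => ρ ^ N) Filter.atTop (nhds 0) :=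
      tendsto_pow_atTop_nhds_zero_of_lt_one hρ0 hρ1
    have hle : ‖c k‖ ≤ 0 :=
      ge_of_tendsto htend (Filter.Eventually.of_forall fun N => bound N k)
    simpa using norm_le_zero_iff.mp hle
  ext k
  have := hzero k
  simp only [hc] at this
  exact sub_eq_zero.mp this
end

section
/- Let F be a field of characteristic zero, complete with respect to a non-Archimedean absolute value, a_0, ..., a_m ∈ F with |a_0| = 1 and |a_i| < 1 for 1 ≤ i ≤ m, and let (c_j) be the coefficients of (a_m t^m + ... + a_0)^{-1} in F[[t]]. Set b = max_{1≤i≤m} |a_i| < 1. Then |c_j| ≤ b^{⌊j/m⌋} for all j; in particular c_j → 0. -/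
/-- Over a complete non-Archimedean valued field of characteristic zero, with `‖a 0‖ = 1`
and `‖a i‖ < 1` for `1 ≤ i ≤ m`, the coefficients `c j` of `(a_m t^m + ... + a_0)⁻¹`
satisfy `‖c j‖ ≤ b ^ ⌊j/m⌋` where `b = max_{1 ≤ i ≤ m} ‖a i‖ < 1`; in particular
`c j → 0`. -/
theorem inverse_coeffs_bound (F : Type*) [NormedField F] [CharZero F] [CompleteSpace F]
    (hna : ∀ x y : F, ‖x + y‖ ≤ max ‖x‖ ‖y‖)
    (m : ℕ) (hm : 1 ≤ m) (a : ℕ → F) (h0 : ‖a 0‖ = 1)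
    (ha : ∀ i, 1 ≤ i → i ≤ m → ‖a i‖ < 1) (c : ℕ → F)
    (hc : PowerSeries.mk c *
      (∑ i ∈ Finset.range (m + 1), PowerSeries.monomial i (a i)) = 1) :
    (∀ j : ℕ, ‖c j‖₊ ≤ ((Finset.Icc 1 m).sup fun i => ‖a i‖₊) ^ (j / m)) ∧
      Filter.Tendsto (fun j => c j) Filter.atTop (nhds 0) := by
  haveI : IsUltrametricDist F :=
    IsUltrametricDist.isUltrametricDist_of_isNonarchimedean_norm hna
  set b : NNReal := (Finset.Icc 1 m).sup fun i => ‖a i‖₊ with hb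
  have h0' : ‖a 0‖₊ = 1 := by ext; simpa using h0
  have hblt : b < 1 := by
    apply Finset.sup_lt_iff (by norm_num : (0 : NNReal) < 1) |>.2
    intro i hi
    simp only [Finset.mem_Icc] at hi
    have := ha i hi.1 hi.2
    rw [← NNReal.coe_lt_coe]
    simpa using this
  have hble : b ≤ 1 := hblt.le
  -- the recurrence from the power series equation
  have hrec : ∀ j : ℕ,
      (∑ i ∈ Finset.range (j + 1), c i * (if j - i ≤ m then a (j - i) else 0))
        = if j = 0 then 1 else 0 := by
    intro j
    have := congrArg (PowerSeries.coeff j) hc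
    rw [PowerSeries.coeff_mul, PowerSeries.coeff_one] at this
    rw [Finset.Nat.sum_antidiagonal_eq_sum_range_succ_mk] at this
    convert this using 2 with i hi
    simp only [PowerSeries.coeff_mk]
    congr 1
    rw [map_sum]
    have : ∀ k ∈ Finset.range (m + 1),
        (PowerSeries.coeff (j - i)) ((PowerSeries.monomial k) (a k))
          = if j - i = k then a k else 0 := by
      intro k _
      rw [PowerSeries.coeff_monomial]
    rw [Finset.sum_congr rfl this, Finset.sum_ite_eq (Finset.range (m + 1))]
    simp [Nat.lt_succ_iff]
  -- the main bound, by strong induction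
  have key : ∀ j : ℕ, ‖c j‖₊ ≤ b ^ (j / m) := by
    intro j
    induction j using Nat.strong_induction_on with
    | _ j ih =>
      rcases Nat.eq_zero_or_pos j with rfl | hj
      · have := hrec 0
        have h2 : c 0 * a 0 = 1 := by simpa [Nat.zero_le m] using this
        have h1 : ‖c 0 * a 0‖₊ = 1 := by rw [h2]; simp
        rw [nnnorm_mul, h0', mul_one] at h1
        simp [h1]
      · have hj0 : j ≠ 0 := hj.ne'
        have := hrec j
        rw [if_neg hj0, Finset.sum_range_succ] at this
        simp only [Nat.sub_self, Nat.zero_le, if_pos] at this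
        have hcj : c j * a 0 = -(∑ i ∈ Finset.range j,
            c i * (if j - i ≤ m then a (j - i) else 0)) := by
          linear_combination this
        have hnorm : ‖c j‖₊ = ‖∑ i ∈ Finset.range j,
            c i * (if j - i ≤ m then a (j - i) else 0)‖₊ := by
          have : ‖c j * a 0‖₊ = ‖c j‖₊ := by rw [nnnorm_mul, h0', mul_one]
          rw [← this, hcj, nnnorm_neg]
        rw [hnorm]
        apply IsUltrametricDist.nnnorm_sum_le_of_forall_le
        intro i hi
        simp only [Finset.mem_range] at hi
        by_cases hle : j - i ≤ m
        · rw [if_pos hle, nnnorm_mul]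
          have h1le : 1 ≤ j - i := Nat.le_sub_of_add_le (by omega)
          have hai : ‖a (j - i)‖₊ ≤ b := by
            apply Finset.le_sup (f := fun i => ‖a i‖₊)
            simp only [Finset.mem_Icc]
            exact ⟨h1le, hle⟩
          calc ‖c i‖₊ * ‖a (j - i)‖₊ ≤ b ^ (i / m) * b :=
                mul_le_mul' (ih i hi) hai
            _ = b ^ (i / m + 1) := by rw [pow_succ]
            _ ≤ b ^ (j / m) := by
                apply pow_le_pow_right_of_le_one' hble
                have hjm : j ≤ i + m := by omega
                calc j / m ≤ (i + m) / m := Nat.div_le_div_right hjm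
                  _ = i / m + 1 := Nat.add_div_right i hm
        · rw [if_neg hle]
          simp
  refine ⟨key, ?_⟩
  have hbound : ∀ j, ‖c j‖ ≤ (b : ℝ) ^ (j / m) := by
    intro j
    have := key j
    rw [← NNReal.coe_le_coe] at this
    simpa using this
  refine squeeze_zero_norm hbound ?_
  · have h1 : Filter.Tendsto (fun n : ℕ => (b : ℝ) ^ n) Filter.atTop (nhds 0) :=
      tendsto_pow_atTop_nhds_zero_of_lt_one b.coe_nonneg (by exact_mod_cast hblt)
    have h2 : Filter.Tendsto (fun j : ℕ => j / m) Filter.atTop Filter.atTop := by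
      apply Filter.tendsto_atTop_atTop.2
      intro n
      exact ⟨n * m, fun j hj => (Nat.le_div_iff_mul_le hm).2 hj⟩
    exact h1.comp h2
end

section
/- Let F be a field of characteristic zero, complete with respect to a non-Archimedean absolute value |·|, with valuation ring K. Let a_0, ..., a_m ∈ K with |a_0| = 1 and |a_i| < 1 for 1 ≤ i ≤ m, and let f = Σ f_i x^i ∈ K[[x]]. Let (c_j) be the coefficients of (a_m t^m + ... + a_0)^{-1} in F[[t]]. Then for each k the series Σ_{n≥0} c_n · binom(n+k, n) · n! · f_{k+n} converges in K, and the power series w(x) = Σ_k (Σ_n c_n binom(n+k,n) n! f_{k+n}) x^k lies in K[[x]] and satisfies a_m w^{(m)} + ... + a_1 w' + a_0 w = f. -/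
open PowerSeries Finset Filter

private lemma natid1 (k i : ℕ) :
    (k + (i + 1)).choose i * i.factorial * (k + 1) =
      (k + (i + 1)).choose (i + 1) * (i + 1).factorial := by
  apply Nat.eq_of_mul_eq_mul_right (Nat.factorial_pos k)
  have h1 := Nat.choose_mul_factorial_mul_factorial (show i ≤ k + (i + 1) by omega)
  have h2 := Nat.choose_mul_factorial_mul_factorial (show i + 1 ≤ k + (i + 1) by omega)
  rw [show k + (i + 1) - i = k + 1 by omega] at h1
  rw [show k + (i + 1) - (i + 1) = k by omega] at h2
  calc (k + (i + 1)).choose i * i.factorial * (k + 1) * k.factorial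
      = (k + (i + 1)).choose i * i.factorial * (k + 1).factorial := by
        rw [Nat.factorial_succ]; ring
    _ = (k + (i + 1)).factorial := h1
    _ = (k + (i + 1)).choose (i + 1) * (i + 1).factorial * k.factorial := h2.symm

private lemma natid2 {i j : ℕ} (k : ℕ) (hij : i ≤ j) :
    (k + i).choose i * i.factorial *
        ((j - i + (k + i)).choose (j - i) * (j - i).factorial) =
      (k + j).choose j * j.factorial := by
  apply Nat.eq_of_mul_eq_mul_right (Nat.factorial_pos k)
  have h1 := Nat.choose_mul_factorial_mul_factorial (show i ≤ k + i by omega)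
  rw [show k + i - i = k by omega] at h1
  have h2 := Nat.choose_mul_factorial_mul_factorial (show j - i ≤ k + j by omega)
  rw [show k + j - (j - i) = k + i by omega] at h2
  have h3 := Nat.choose_mul_factorial_mul_factorial (show j ≤ k + j by omega)
  rw [show k + j - j = k by omega] at h3
  rw [show j - i + (k + i) = k + j by omega]
  calc (k + i).choose i * i.factorial * ((k + j).choose (j - i) * (j - i).factorial)
        * k.factorial
      = (k + j).choose (j - i) * (j - i).factorial
          * ((k + i).choose i * i.factorial * k.factorial) := by ring
    _ = (k + j).choose (j - i) * (j - i).factorial * (k + i).factorial := by rw [h1]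
    _ = (k + j).factorial := h2
    _ = (k + j).choose j * j.factorial * k.factorial := h3.symm

private lemma coeff_iterate_derivativeFun {R : Type*} [CommRing R]
    (w : PowerSeries R) (i k : ℕ) :
    PowerSeries.coeff k (PowerSeries.derivativeFun^[i] w) =
      (((k + i).choose i * i.factorial : ℕ) : R) * PowerSeries.coeff (k + i) w := by
  induction i generalizing k with
  | zero => simp
  | succ i ih =>
    rw [Function.iterate_succ_apply', show ∀ g : PowerSeries R, g.derivativeFun = PowerSeries.derivative R g from fun _ => rfl, PowerSeries.coeff_derivative, ih (k + 1)]
    rw [show k + 1 + i = k + (i + 1) by omega]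
    rw [← natid1 k i]
    push_cast
    ring

/-- Existence over a complete non-Archimedean valued field: with `‖a 0‖ = 1`, `‖a i‖ < 1`
for `1 ≤ i ≤ m`, `f ∈ K⟦x⟧`, and `c` the coefficients of `(a_m t^m + ... + a_0)⁻¹`, for
every `k` the series `∑_n c_n C(n+k,n) n! f_{k+n}` converges in `K`, and the power series
`w` with these sums as coefficients lies in `K⟦x⟧` and solves the equation. -/
theorem nonarchimedean_existence (F : Type*) [NormedField F] [CharZero F] [CompleteSpace F]
    (hna : ∀ x y : F, ‖x + y‖ ≤ max ‖x‖ ‖y‖)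
    (m : ℕ) (hm : 1 ≤ m) (a : ℕ → F) (h0 : ‖a 0‖ = 1)
    (ha : ∀ i, 1 ≤ i → i ≤ m → ‖a i‖ < 1) (c : ℕ → F)
    (hc : PowerSeries.mk c *
      (∑ i ∈ Finset.range (m + 1), PowerSeries.monomial i (a i)) = 1)
    (f : PowerSeries F) (hf : ∀ k, ‖PowerSeries.coeff k f‖ ≤ 1) :
    (∀ k : ℕ, Summable fun n : ℕ =>
      c n * (Nat.choose (n + k) n : F) * (Nat.factorial n : F)
        * PowerSeries.coeff (k + n) f) ∧
    (∀ k : ℕ, ‖∑' n : ℕ,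
      c n * (Nat.choose (n + k) n : F) * (Nat.factorial n : F)
        * PowerSeries.coeff (k + n) f‖ ≤ 1) ∧
    ∑ i ∈ Finset.range (m + 1),
      PowerSeries.C (a i) * (PowerSeries.derivativeFun^[i]
        (PowerSeries.mk fun k => ∑' n : ℕ,
          c n * (Nat.choose (n + k) n : F) * (Nat.factorial n : F)
            * PowerSeries.coeff (k + n) f)) = f := by
  haveI : IsUltrametricDist F :=
    IsUltrametricDist.isUltrametricDist_of_forall_norm_add_le_max_norm hna
  -- coefficients of the polynomial Q
  have hcoeffQ : ∀ l, PowerSeries.coeff l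
      (∑ i ∈ Finset.range (m + 1), PowerSeries.monomial i (a i))
      = if l ≤ m then a l else 0 := by
    intro l
    rw [map_sum]
    simp only [PowerSeries.coeff_monomial]
    rw [Finset.sum_ite_eq (Finset.range (m + 1)) l a]
    simp [Nat.lt_succ_iff]
  -- coefficients of the product, from hc
  have hprod : ∀ j, (∑ i ∈ Finset.range (m + 1), if i ≤ j then a i * c (j - i) else 0)
      = if j = 0 then 1 else 0 := by
    intro j
    have h1 : PowerSeries.coeff j (PowerSeries.mk c *
        (∑ i ∈ Finset.range (m + 1), PowerSeries.monomial i (a i)))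
        = if j = 0 then 1 else 0 := by
      rw [hc, PowerSeries.coeff_one]
    rw [mul_comm, PowerSeries.coeff_mul,
      Finset.Nat.sum_antidiagonal_eq_sum_range_succ_mk] at h1
    simp only [PowerSeries.coeff_mk, Nat.succ_eq_add_one] at h1
    rw [← h1]
    have hG : ∀ u ∈ Finset.range (j + 1),
        PowerSeries.coeff u (∑ i ∈ Finset.range (m + 1), PowerSeries.monomial i (a i))
          * c (j - u)
        = if u ≤ j ∧ u ≤ m then a u * c (j - u) else 0 := by
      intro u hu
      rw [hcoeffQ u]
      simp only [Finset.mem_range, Nat.lt_succ_iff] at hu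
      by_cases h : u ≤ m <;> simp [h, hu]
    have hG2 : ∀ u ∈ Finset.range (m + 1), (if u ≤ j then a u * c (j - u) else 0)
        = if u ≤ j ∧ u ≤ m then a u * c (j - u) else 0 := by
      intro u hu
      simp only [Finset.mem_range, Nat.lt_succ_iff] at hu
      by_cases h : u ≤ j <;> simp [h, hu]
    rw [Finset.sum_congr rfl hG, Finset.sum_congr rfl hG2]
    have e1 : ∑ u ∈ Finset.range (m + 1), (if u ≤ j ∧ u ≤ m then a u * c (j - u) else 0)
        = ∑ u ∈ Finset.range (j + m + 2), (if u ≤ j ∧ u ≤ m then a u * c (j - u) else 0) := by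
      apply Finset.sum_subset
      · intro x hx; simp only [Finset.mem_range] at *; omega
      · intro x _ hx
        simp only [Finset.mem_range] at hx
        have hnc : ¬ (x ≤ j ∧ x ≤ m) := by omega
        rw [if_neg hnc]
    have e2 : ∑ u ∈ Finset.range (j + 1), (if u ≤ j ∧ u ≤ m then a u * c (j - u) else 0)
        = ∑ u ∈ Finset.range (j + m + 2), (if u ≤ j ∧ u ≤ m then a u * c (j - u) else 0) := by
      apply Finset.sum_subset
      · intro x hx; simp only [Finset.mem_range] at *; omega
      · intro x _ hx
        simp only [Finset.mem_range] at hx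
        have hnc : ¬ (x ≤ j ∧ x ≤ m) := by omega
        rw [if_neg hnc]
    rw [e1, e2]
  -- c 0
  have hc0 : a 0 * c 0 = 1 := by
    have h := hprod 0
    rw [if_pos rfl] at h
    rw [← h]
    rw [Finset.sum_eq_single 0]
    · simp
    · intro i _ hi
      rw [if_neg (by omega)]
    · intro h'; exact absurd (Finset.mem_range.mpr (by omega)) h'
  -- recurrence
  have hcrec : ∀ n, 1 ≤ n → a 0 * c n
      = - ∑ i ∈ Finset.Icc 1 m, (if i ≤ n then a i * c (n - i) else 0) := by
    intro n hn
    have h := hprod n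
    rw [if_neg (by omega)] at h
    have hsplit : Finset.range (m + 1) = insert 0 (Finset.Icc 1 m) := by
      ext x
      simp only [Finset.mem_range, Finset.mem_insert, Finset.mem_Icc]
      omega
    rw [hsplit, Finset.sum_insert (by simp)] at h
    rw [if_pos (Nat.zero_le n), Nat.sub_zero] at h
    exact eq_neg_of_add_eq_zero_left h
  -- b
  have hne : (Finset.Icc 1 m).Nonempty := Finset.nonempty_Icc.mpr hm
  set b : ℝ := (Finset.Icc 1 m).sup' hne (fun i => ‖a i‖) with hb
  have hb_mem : ∀ i ∈ Finset.Icc 1 m, ‖a i‖ ≤ b := by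
    intro i hi
    rw [hb]
    exact Finset.le_sup' (fun i => ‖a i‖) hi
  have hb0 : 0 ≤ b :=
    le_trans (norm_nonneg (a 1)) (hb_mem 1 (Finset.mem_Icc.mpr ⟨le_refl 1, hm⟩))
  have hb1 : b < 1 := by
    rw [hb]
    apply (Finset.sup'_lt_iff hne).mpr
    intro i hi
    rw [Finset.mem_Icc] at hi
    exact ha i hi.1 hi.2
  -- norm bound on c
  have hcnorm : ∀ n, ‖c n‖ ≤ b ^ (n / m) := by
    intro n
    induction n using Nat.strong_induction_on with
    | _ n ih =>
      rcases Nat.eq_zero_or_pos n with rfl | hn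
      · have h1 : ‖a 0 * c 0‖ = 1 := by rw [hc0, norm_one]
        rw [norm_mul, h0, one_mul] at h1
        simp [h1]
      · have hnth : ‖c n‖ = ‖∑ i ∈ Finset.Icc 1 m, (if i ≤ n then a i * c (n - i) else 0)‖ := by
          have he : ‖c n‖ = ‖a 0 * c n‖ := by rw [norm_mul, h0, one_mul]
          rw [he, hcrec n hn, norm_neg]
        rw [hnth]
        apply IsUltrametricDist.norm_sum_le_of_forall_le_of_nonneg (pow_nonneg hb0 _)
        intro i hi
        rw [Finset.mem_Icc] at hi
        by_cases hin : i ≤ n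
        · rw [if_pos hin, norm_mul]
          have h1 : ‖a i‖ ≤ b := hb_mem i (Finset.mem_Icc.mpr hi)
          have h2 : ‖c (n - i)‖ ≤ b ^ ((n - i) / m) := ih _ (by omega)
          calc ‖a i‖ * ‖c (n - i)‖ ≤ b * b ^ ((n - i) / m) :=
                mul_le_mul h1 h2 (norm_nonneg _) hb0
            _ = b ^ ((n - i) / m + 1) := by rw [pow_succ, mul_comm]
            _ ≤ b ^ (n / m) := by
                apply pow_le_pow_of_le_one hb0 hb1.le
                rcases le_or_gt m n with hmn | hmn
                · rw [Nat.div_eq_sub_div (by omega) hmn]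
                  have h3 : (n - m) / m ≤ (n - i) / m := Nat.div_le_div_right (by omega)
                  exact Nat.add_le_add_right h3 1
                · rw [Nat.div_eq_of_lt hmn]
                  exact Nat.zero_le _
        · rw [if_neg hin, norm_zero]
          exact pow_nonneg hb0 _
  have hcle1 : ∀ n, ‖c n‖ ≤ 1 := fun n => (hcnorm n).trans (pow_le_one₀ hb0 hb1.le)
  -- term bound
  have hterm : ∀ k n, ‖c n * (Nat.choose (n + k) n : F) * (Nat.factorial n : F)
      * PowerSeries.coeff (k + n) f‖ ≤ ‖c n‖ := by
    intro k n
    have h1 : ‖((n + k).choose n : F)‖ ≤ 1 := IsUltrametricDist.norm_natCast_le_one F _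
    have h2 : ‖(n.factorial : F)‖ ≤ 1 := IsUltrametricDist.norm_natCast_le_one F _
    have h3 := hf (k + n)
    rw [norm_mul, norm_mul, norm_mul]
    calc ‖c n‖ * ‖((n + k).choose n : F)‖ * ‖(n.factorial : F)‖ * ‖PowerSeries.coeff (k + n) f‖
        ≤ ‖c n‖ * 1 * 1 * 1 := by
          apply mul_le_mul _ h3 (norm_nonneg _) (by positivity)
          apply mul_le_mul _ h2 (norm_nonneg _) (by positivity)
          exact mul_le_mul le_rfl h1 (norm_nonneg _) (norm_nonneg _)
      _ = ‖c n‖ := by ring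
  -- summability
  have hsummable : ∀ k : ℕ, Summable fun n : ℕ =>
      c n * (Nat.choose (n + k) n : F) * (Nat.factorial n : F)
        * PowerSeries.coeff (k + n) f := by
    intro k
    apply NonarchimedeanAddGroup.summable_of_tendsto_cofinite_zero
    rw [Nat.cofinite_eq_atTop]
    apply squeeze_zero_norm (fun n => (hterm k n).trans (hcnorm n))
    have h1 : Tendsto (fun e : ℕ => b ^ e) atTop (nhds 0) :=
      tendsto_pow_atTop_nhds_zero_of_lt_one hb0 hb1
    have h2 : Tendsto (fun n : ℕ => n / m) atTop atTop := by
      apply Filter.tendsto_atTop_atTop.mpr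
      intro B
      exact ⟨B * m, fun n hn => (Nat.le_div_iff_mul_le (by omega)).mpr hn⟩
    exact h1.comp h2
  have hbound : ∀ k : ℕ, ‖∑' n : ℕ,
      c n * (Nat.choose (n + k) n : F) * (Nat.factorial n : F)
        * PowerSeries.coeff (k + n) f‖ ≤ 1 := fun k =>
    IsUltrametricDist.norm_tsum_le_of_forall_le_of_nonneg zero_le_one
      (fun n => (hterm k n).trans (hcle1 n))
  refine ⟨hsummable, hbound, ?_⟩
  -- part 3
  set T : ℕ → ℕ → F := fun k n => c n * (Nat.choose (n + k) n : F) * (Nat.factorial n : F)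
    * PowerSeries.coeff (k + n) f with hT
  set w : PowerSeries F := PowerSeries.mk fun k => ∑' n : ℕ, T k n with hw
  apply PowerSeries.ext
  intro k
  rw [map_sum]
  set h : ℕ → ℕ → F := fun i j => if i ≤ j then
      a i * (((k + i).choose i * i.factorial : ℕ) : F) * T (k + i) (j - i) else 0 with hh
  have hinj : ∀ i : ℕ, Function.Injective (fun n : ℕ => n + i) := by
    intro i x y hxy
    simpa using hxy
  have hzero : ∀ i, ∀ j ∉ Set.range (fun n : ℕ => n + i), h i j = 0 := by
    intro i j hj
    have hnle : ¬ i ≤ j := by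
      intro hle
      exact hj ⟨j - i, by simp; omega⟩
    simp [hh, hnle]
  have hcomp : ∀ i n, h i (n + i) = a i * (((k + i).choose i * i.factorial : ℕ) : F)
      * T (k + i) n := by
    intro i n
    simp only [hh]
    rw [if_pos (by omega), Nat.add_sub_cancel]
  have hsumh : ∀ i, Summable (h i) := by
    intro i
    rw [← (hinj i).summable_iff (hzero i)]
    have he : (h i) ∘ (fun n : ℕ => n + i)
        = fun n => a i * (((k + i).choose i * i.factorial : ℕ) : F) * T (k + i) n :=
      funext fun n => hcomp i n
    rw [he]
    have := (hsummable (k + i)).mul_left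
      (a i * (((k + i).choose i * i.factorial : ℕ) : F))
    simpa only [hT, mul_assoc] using this
  have hstep : ∀ i, a i * (((k + i).choose i * i.factorial : ℕ) : F) * ∑' n, T (k + i) n
      = ∑' j, h i j := by
    intro i
    rw [← tsum_mul_left]
    have hsupp : Function.support (h i) ⊆ Set.range (fun n : ℕ => n + i) := by
      intro j hj
      by_contra hcon
      exact (Function.mem_support.mp hj) (hzero i j hcon)
    rw [← (hinj i).tsum_eq hsupp]
    exact tsum_congr fun n => (hcomp i n).symm
  have hcoeff_i : ∀ i, PowerSeries.coeff k
      (PowerSeries.C (a i) * (PowerSeries.derivativeFun^[i] w))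
      = a i * (((k + i).choose i * i.factorial : ℕ) : F) * ∑' n, T (k + i) n := by
    intro i
    rw [PowerSeries.coeff_C_mul, coeff_iterate_derivativeFun, hw, PowerSeries.coeff_mk,
      ← mul_assoc]
  calc ∑ i ∈ Finset.range (m + 1),
        PowerSeries.coeff k (PowerSeries.C (a i) * (PowerSeries.derivativeFun^[i] w))
      = ∑ i ∈ Finset.range (m + 1), ∑' j, h i j := by
        refine Finset.sum_congr rfl fun i _ => ?_
        rw [hcoeff_i i, hstep i]
    _ = ∑' j, ∑ i ∈ Finset.range (m + 1), h i j := (Summable.tsum_finsetSum fun i _ => hsumh i).symm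
    _ = ∑' j, (if j = 0 then PowerSeries.coeff k f else 0) := by
        apply tsum_congr
        intro j
        have hij : ∀ i, h i j = (((k + j).choose j * j.factorial : ℕ) : F)
            * PowerSeries.coeff (k + j) f * (if i ≤ j then a i * c (j - i) else 0) := by
          intro i
          by_cases hle : i ≤ j
          · simp only [hh, hT]
            rw [if_pos hle, if_pos hle]
            rw [show k + i + (j - i) = k + j by omega]
            rw [← natid2 k hle]
            push_cast
            ring
          · simp [hh, hle]
        calc ∑ i ∈ Finset.range (m + 1), h i j
            = ∑ i ∈ Finset.range (m + 1), ((((k + j).choose j * j.factorial : ℕ) : F)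
                * PowerSeries.coeff (k + j) f * (if i ≤ j then a i * c (j - i) else 0)) :=
              Finset.sum_congr rfl fun i _ => hij i
          _ = (((k + j).choose j * j.factorial : ℕ) : F) * PowerSeries.coeff (k + j) f
                * (if j = 0 then 1 else 0) := by rw [← Finset.mul_sum, hprod j]
          _ = if j = 0 then PowerSeries.coeff k f else 0 := by
              by_cases hj : j = 0 <;> simp [hj]
    _ = PowerSeries.coeff k f :=
        (tsum_eq_single 0 fun j hj => if_neg hj).trans (if_pos rfl)
end

section
/- Let a_0, ..., a_m be integers, p a prime not dividing a_0, and f ∈ ℤ_p[[x]]. Then the equation a_m w^{(m)} + ... + a_1 w' + a_0 w = f has a unique solution w ∈ ℤ_p[[x]]. -/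
open Finset

/-- `rr n i = (n+1)(n+2)⋯(n+i) = (n+i)!/n!`. -/
def padicEU_rr (n i : ℕ) : ℕ := ∏ j ∈ Finset.range i, (n + j + 1)

lemma padicEU_rr_zero (n : ℕ) : padicEU_rr n 0 = 1 := rfl

lemma padicEU_rr_succ (n i : ℕ) : padicEU_rr n (i + 1) = padicEU_rr n i * (n + i + 1) :=
  Finset.prod_range_succ _ _

lemma padicEU_rr_add (n i j : ℕ) :
    padicEU_rr n (i + j) = padicEU_rr n i * padicEU_rr (n + i) j := by
  unfold padicEU_rr
  rw [Finset.prod_range_add]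
  congr 1
  exact Finset.prod_congr rfl fun x _ => by ring

lemma padicEU_rr_mul_factorial (n k : ℕ) : padicEU_rr n k * n.factorial = (n + k).factorial := by
  induction k with
  | zero => simp [padicEU_rr_zero]
  | succ k ih =>
    rw [padicEU_rr_succ, ← add_assoc, Nat.factorial_succ, mul_comm (padicEU_rr n k), mul_assoc,
      ih]

lemma padicEU_factorial_dvd_rr (n k : ℕ) : k.factorial ∣ padicEU_rr n k := by
  have h := Nat.factorial_mul_factorial_dvd_factorial_add k n
  rw [add_comm k n, ← padicEU_rr_mul_factorial] at h
  exact (Nat.mul_dvd_mul_iff_right n.factorial_pos).mp h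

lemma padicEU_pow_div_dvd_factorial {p : ℕ} (hp : p.Prime) (k : ℕ) :
    p ^ (k / p) ∣ k.factorial := by
  rcases Nat.lt_or_ge k p with h | h
  · simp [Nat.div_eq_of_lt h]
  · rw [Nat.Prime.pow_dvd_factorial_iff hp (Nat.lt_succ_self _)]
    have h1 : 1 ∈ Finset.Ico 1 (Nat.log p k + 1) := by
      simp only [Finset.mem_Ico]
      refine ⟨le_refl _, ?_⟩
      have : 1 ≤ Nat.log p k := by
        rw [Nat.le_log_iff_pow_le hp.one_lt (by have := hp.two_le; omega)]
        simpa using h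
      omega
    calc k / p = k / p ^ 1 := by rw [pow_one]
    _ ≤ ∑ i ∈ Finset.Ico 1 (Nat.log p k + 1), k / p ^ i :=
        Finset.single_le_sum (f := fun i => k / p ^ i) (fun i _ => Nat.zero_le _) h1

lemma padicEU_norm_le_of_dvd {p : ℕ} [Fact p.Prime] {x y : ℤ_[p]} (h : x ∣ y) : ‖y‖ ≤ ‖x‖ := by
  obtain ⟨c, rfl⟩ := h
  rw [norm_mul]
  calc ‖x‖ * ‖c‖ ≤ ‖x‖ * 1 := by
        exact mul_le_mul_of_nonneg_left (PadicInt.norm_le_one c) (norm_nonneg x)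
  _ = ‖x‖ := mul_one _

lemma padicEU_tendsto_norm_rr {p : ℕ} [Fact p.Prime] (n : ℕ) :
    Filter.Tendsto (fun k => ‖((padicEU_rr n k : ℕ) : ℤ_[p])‖) Filter.atTop (nhds 0) := by
  have hp : p.Prime := Fact.out
  have hb : ∀ k : ℕ, ‖((padicEU_rr n k : ℕ) : ℤ_[p])‖ ≤ ((p : ℝ)⁻¹) ^ (k / p) := by
    intro k
    have hd : (p : ℕ) ^ (k / p) ∣ padicEU_rr n k :=
      ((padicEU_pow_div_dvd_factorial hp k).trans (padicEU_factorial_dvd_rr n k))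
    have hd2 : ((p : ℤ_[p])) ^ (k / p) ∣ ((padicEU_rr n k : ℕ) : ℤ_[p]) := by
      have := Nat.cast_dvd_cast (α := ℤ_[p]) hd
      simpa using this
    calc ‖((padicEU_rr n k : ℕ) : ℤ_[p])‖ ≤ ‖((p : ℤ_[p])) ^ (k / p)‖ :=
          padicEU_norm_le_of_dvd hd2
    _ = ((p : ℝ)⁻¹) ^ (k / p) := by
          rw [norm_pow, PadicInt.norm_p]
  have hdiv : Filter.Tendsto (fun k : ℕ => k / p) Filter.atTop Filter.atTop := by
    apply Filter.tendsto_atTop_atTop.mpr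
    intro b
    refine ⟨b * p, fun k hk => ?_⟩
    exact (Nat.le_div_iff_mul_le hp.pos).mpr hk
  have hpow : Filter.Tendsto (fun k : ℕ => ((p : ℝ)⁻¹) ^ (k / p)) Filter.atTop (nhds 0) := by
    refine (tendsto_pow_atTop_nhds_zero_of_lt_one ?_ ?_).comp hdiv
    · positivity
    · rw [inv_lt_one_iff₀]
      right
      exact_mod_cast hp.one_lt
  exact squeeze_zero (fun k => norm_nonneg _) hb hpow

/-- For integer coefficients `a i` with `p` prime not dividing `a 0`, the equation
`a_m w^{(m)} + ... + a_1 w' + a_0 w = f` has a unique solution in `ℤ_p⟦x⟧`. -/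
theorem padic_existence_uniqueness (p : ℕ) [Fact p.Prime] (m : ℕ) (a : ℕ → ℤ)
    (h0 : ¬ (p : ℤ) ∣ a 0) (f : PowerSeries ℤ_[p]) :
    ∃! w : PowerSeries ℤ_[p],
      ∑ i ∈ Finset.range (m + 1),
        PowerSeries.C ((a i : ℤ_[p])) * (PowerSeries.derivativeFun^[i] w) = f := by
  classical
  have hp : p.Prime := Fact.out
  -- `a 0` is a unit in `ℤ_[p]`
  have hnorm : ‖((a 0 : ℤ_[p]))‖ = 1 := by
    have h1 : ¬ ‖((a 0 : ℤ_[p]))‖ < 1 := by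
      rw [PadicInt.norm_int_lt_one_iff_dvd]; exact h0
    exact le_antisymm (PadicInt.norm_le_one _) (not_lt.mp h1)
  obtain ⟨u, hu⟩ := PadicInt.isUnit_iff.mpr hnorm
  set v : ℤ_[p] := ((u⁻¹ : ℤ_[p]ˣ) : ℤ_[p]) with hv_def
  have hv : v * ((a 0 : ℤ_[p])) = 1 := by rw [← hu]; exact u.inv_mul
  -- the basic recursion operator on coefficient sequences
  set T : (ℕ → ℤ_[p]) → ℕ → ℤ_[p] :=
    fun w n => -v * ∑ i ∈ Finset.Icc 1 m,
      ((a i : ℤ_[p])) * ((padicEU_rr n i : ℕ) : ℤ_[p]) * w (n + i) with hT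
  -- divisibility of iterates
  have hdvd : ∀ (k : ℕ) (w : ℕ → ℤ_[p]) (n : ℕ),
      ((padicEU_rr n k : ℕ) : ℤ_[p]) ∣ T^[k] w n := by
    intro k
    induction k with
    | zero => intro w n; simp [padicEU_rr_zero]
    | succ k ih =>
      intro w n
      rw [Function.iterate_succ_apply', hT]
      refine Dvd.dvd.mul_left (Finset.dvd_sum fun i hi => ?_) _
      obtain ⟨c, hc⟩ := ih w (n + i)
      have hi1 : 1 ≤ i := (Finset.mem_Icc.mp hi).1
      have hnat : padicEU_rr n i * padicEU_rr (n + i) k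
          = padicEU_rr n (k + 1) * padicEU_rr (n + (k + 1)) (i - 1) := by
        rw [← padicEU_rr_add, show i + k = (k + 1) + (i - 1) by omega, padicEU_rr_add]
      have hcast := congrArg (fun x : ℕ => (x : ℤ_[p])) hnat
      push_cast at hcast
      refine ⟨((padicEU_rr (n + (k + 1)) (i - 1) : ℕ) : ℤ_[p]) * ((a i : ℤ_[p]) * c), ?_⟩
      rw [hc]
      linear_combination ((a i : ℤ_[p]) * c) * hcast
  -- coefficients of iterated derivatives
  have hco : ∀ (i : ℕ) (w : PowerSeries ℤ_[p]) (n : ℕ),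
      (PowerSeries.coeff n) (PowerSeries.derivativeFun^[i] w)
        = ((padicEU_rr n i : ℕ) : ℤ_[p]) * PowerSeries.coeff (n + i) w := by
    intro i
    induction i with
    | zero => intro w n; simp [padicEU_rr_zero]
    | succ i ih =>
      intro w n
      rw [Function.iterate_succ_apply, ih]
      erw [PowerSeries.coeff_derivative]
      rw [padicEU_rr_succ,
        show n + (i + 1) = (n + i) + 1 from rfl]
      push_cast
      ring
  -- the coefficientwise characterization of the equation
  have hchar : ∀ w : PowerSeries ℤ_[p],
      (∑ i ∈ Finset.range (m + 1),
        PowerSeries.C ((a i : ℤ_[p])) * (PowerSeries.derivativeFun^[i] w) = f)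
      ↔ ∀ n, ((a 0 : ℤ_[p])) * PowerSeries.coeff n w
          + ∑ i ∈ Finset.Icc 1 m, ((a i : ℤ_[p])) * ((padicEU_rr n i : ℕ) : ℤ_[p])
              * PowerSeries.coeff (n + i) w
          = PowerSeries.coeff n f := by
    intro w
    rw [PowerSeries.ext_iff]
    apply forall_congr'
    intro n
    rw [map_sum]
    have hsplit : Finset.range (m + 1) = insert 0 (Finset.Icc 1 m) := by
      ext x; simp only [Finset.mem_range, Finset.mem_insert, Finset.mem_Icc]; omega
    rw [hsplit, Finset.sum_insert (by simp)]
    simp only [PowerSeries.coeff_C_mul, hco, padicEU_rr_zero, Nat.cast_one, one_mul,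
      Nat.add_zero, mul_assoc]
  -- summability of the iterates
  have hsum : ∀ (w : ℕ → ℤ_[p]) (n : ℕ), Summable fun k => T^[k] w n := by
    intro w n
    apply NonarchimedeanAddGroup.summable_of_tendsto_cofinite_zero
    rw [Nat.cofinite_eq_atTop, tendsto_zero_iff_norm_tendsto_zero]
    exact squeeze_zero (fun k => norm_nonneg _)
      (fun k => padicEU_norm_le_of_dvd (hdvd k w n)) (padicEU_tendsto_norm_rr n)
  -- the candidate solution sequence
  set g : ℕ → ℤ_[p] := fun n => v * PowerSeries.coeff n f with hg
  set W : ℕ → ℤ_[p] := fun n => ∑' k, T^[k] g n with hWdef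
  have hfix : ∀ n, W n = g n + T W n := by
    intro n
    have h1 : T W n = ∑' k, T^[k + 1] g n := by
      rw [hT]
      simp only
      have h2 : ∀ i ∈ Finset.Icc 1 m,
          ((a i : ℤ_[p])) * ((padicEU_rr n i : ℕ) : ℤ_[p]) * W (n + i)
            = ∑' k, ((a i : ℤ_[p])) * ((padicEU_rr n i : ℕ) : ℤ_[p]) * T^[k] g (n + i) := by
        intro i _
        rw [hWdef]
        simp only
        rw [(hsum g (n + i)).tsum_mul_left]
      rw [Finset.sum_congr rfl h2,
        ← Summable.tsum_finsetSum (fun i _ => Summable.mul_left _ (hsum g (n + i))),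
        ← Summable.tsum_mul_left (-v)
          (summable_sum fun i _ => Summable.mul_left _ (hsum g (n + i)))]
      congr 1
      funext k
      rw [Function.iterate_succ_apply', hT]
    rw [h1]
    have h3 := Summable.tsum_eq_zero_add (hsum g n)
    rw [hWdef]
    simpa using h3
  -- the coefficientwise equation for W
  have hWeq : ∀ n, ((a 0 : ℤ_[p])) * W n
      + ∑ i ∈ Finset.Icc 1 m, ((a i : ℤ_[p])) * ((padicEU_rr n i : ℕ) : ℤ_[p]) * W (n + i)
      = PowerSeries.coeff n f := by
    intro n
    have h1 := hfix n
    rw [hT, hg] at h1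
    simp only at h1
    linear_combination ((a 0 : ℤ_[p])) * h1
      + (PowerSeries.coeff n f
        - ∑ i ∈ Finset.Icc 1 m, ((a i : ℤ_[p])) * ((padicEU_rr n i : ℕ) : ℤ_[p]) * W (n + i)) * hv
  refine ⟨PowerSeries.mk W, ?_, ?_⟩
  · refine (hchar _).mpr fun n => ?_
    simpa only [PowerSeries.coeff_mk, mul_assoc] using hWeq n
  · intro w hw
    rw [hchar] at hw
    set d : ℕ → ℤ_[p] := fun n => PowerSeries.coeff n w - W n with hd_def
    have hd : ∀ n, d n = T d n := by
      intro n
      have e1 := hw n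
      have e2 := hWeq n
      rw [hT, hd_def]
      simp only
      have e3 : ∑ i ∈ Finset.Icc 1 m, ((a i : ℤ_[p])) * ((padicEU_rr n i : ℕ) : ℤ_[p])
            * (PowerSeries.coeff (n + i) w - W (n + i))
          = ∑ i ∈ Finset.Icc 1 m, ((a i : ℤ_[p])) * ((padicEU_rr n i : ℕ) : ℤ_[p])
              * PowerSeries.coeff (n + i) w
            - ∑ i ∈ Finset.Icc 1 m, ((a i : ℤ_[p])) * ((padicEU_rr n i : ℕ) : ℤ_[p])
              * W (n + i) := by
        rw [← Finset.sum_sub_distrib]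
        exact Finset.sum_congr rfl fun i _ => by ring
      rw [e3]
      linear_combination v * e1 - v * e2
        - (PowerSeries.coeff n w - W n) * hv
    have hTd : T d = d := funext fun n => (hd n).symm
    have hiter : ∀ k, T^[k] d = d := by
      intro k
      induction k with
      | zero => rfl
      | succ k ih => rw [Function.iterate_succ_apply', ih, hTd]
    have hzero : ∀ n, d n = 0 := by
      intro n
      have hle : ∀ k, ‖d n‖ ≤ ‖((padicEU_rr n k : ℕ) : ℤ_[p])‖ := by
        intro k
        have h4 := hdvd k d n
        rw [hiter k] at h4
        exact padicEU_norm_le_of_dvd h4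
      have h5 := ge_of_tendsto (padicEU_tendsto_norm_rr (p := p) n)
        (Filter.Eventually.of_forall hle)
      exact norm_le_zero_iff.mp h5
    ext n
    rw [PowerSeries.coeff_mk]
    have h6 := hzero n
    rw [hd_def] at h6
    simp only at h6
    exact sub_eq_zero.mp h6
end

section
/- The differential equation y' + y = 1 + x + x^2 + x^3 + ... has no solution y ∈ ℤ[[x]], but for every prime p it has a unique solution in ℤ_p[[x]]. -/
open Filter Nat Topology Finset

section aux

lemma pow_dvd_fac (p m : ℕ) (hp : 0 < p) : p ^ m ∣ (p * m)! := by
  induction m with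
  | zero => simp
  | succ m ih =>
    have h1 : (p * m)! ∣ (p * m + p - 1)! := Nat.factorial_dvd_factorial (by omega)
    have h3 : (p * (m+1))! = (p * (m+1)) * (p * (m+1) - 1)! :=
      (Nat.mul_factorial_pred (by positivity)).symm
    have h4 : (p*(m+1)-1) = p*m + p - 1 := by
      have : p*(m+1) = p*m+p := by ring
      omega
    calc p ^ (m+1) = p^m * p := pow_succ p m
    _ ∣ (p*m)! * (p*(m+1)) := mul_dvd_mul ih ⟨m+1, by ring⟩
    _ ∣ (p*(m+1)-1)! * (p*(m+1)) := mul_dvd_mul_right (h4 ▸ h1) _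
    _ = (p*(m+1))! := by rw [h3, mul_comm]

lemma norm_fac_tendsto (p : ℕ) [hp : Fact p.Prime] :
    Tendsto (fun n : ℕ => ‖((n ! : ℤ_[p]))‖) atTop (𝓝 0) := by
  have hp1 : (1:ℝ) < p := by exact_mod_cast hp.out.one_lt
  rw [NormedAddCommGroup.tendsto_nhds_zero]
  intro ε hε
  obtain ⟨k, hk⟩ := exists_pow_lt_of_lt_one hε
    (by rw [inv_lt_one_iff₀]; right; exact hp1 : (p:ℝ)⁻¹ < 1)
  rw [eventually_atTop]
  refine ⟨p * k, fun n hn => ?_⟩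
  have hdvd : (p:ℤ) ^ k ∣ (n ! : ℤ) := by
    exact_mod_cast (pow_dvd_fac p k hp.out.pos).trans (Nat.factorial_dvd_factorial hn)
  have := PadicInt.norm_int_le_pow_iff_dvd (k := (n ! : ℤ)) (n := k) (p := p) |>.mpr hdvd
  rw [norm_norm]
  calc ‖((n ! : ℤ_[p]))‖ ≤ (p:ℝ) ^ (-(k:ℤ)) := by exact_mod_cast this
  _ = ((p:ℝ)⁻¹) ^ k := by rw [zpow_neg, inv_pow, zpow_natCast]
  _ < ε := hk

-- `A k n = (k+1)(k+2)⋯(k+n) = (k+n)!/k!`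
def A (k n : ℕ) : ℕ := (k+1).ascFactorial n

lemma A_zero (k : ℕ) : A k 0 = 1 := Nat.ascFactorial_zero _

lemma fac_mul_A (k n : ℕ) : k ! * A k n = (k + n)! := Nat.factorial_mul_ascFactorial k n

lemma A_succ (k n : ℕ) : (k+1) * A (k+1) n = A k (n+1) := by
  apply Nat.eq_of_mul_eq_mul_left (Nat.factorial_pos k)
  calc k ! * ((k+1) * A (k+1) n) = (k+1)! * A (k+1) n := by
        rw [Nat.factorial_succ]; ring
    _ = (k + 1 + n)! := fac_mul_A (k+1) n
    _ = (k + (n+1))! := by ring_nf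
    _ = k ! * A k (n+1) := (fac_mul_A k (n+1)).symm

lemma fac_dvd_A (k n : ℕ) : n ! ∣ A k n := Nat.factorial_dvd_ascFactorial (k+1) n

variable (p : ℕ) [hp : Fact p.Prime]

lemma norm_neg_one_pow (n : ℕ) : ‖(-1 : ℤ_[p])^n‖ = 1 := by
  induction n with
  | zero => simp
  | succ n ih => rw [pow_succ, norm_mul, ih, one_mul, norm_neg, norm_one]

lemma norm_A_le (k n : ℕ) : ‖((A k n : ℤ_[p]))‖ ≤ ‖((n ! : ℤ_[p]))‖ := by
  obtain ⟨c, hc⟩ := fac_dvd_A k n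
  have h : ((A k n : ℤ_[p])) = (n ! : ℤ_[p]) * (c : ℤ_[p]) := by
    exact_mod_cast congrArg (Nat.cast : ℕ → ℤ_[p]) hc
  rw [h, norm_mul]
  calc ‖(n ! : ℤ_[p])‖ * ‖(c : ℤ_[p])‖ ≤ ‖(n ! : ℤ_[p])‖ * 1 :=
        mul_le_mul_of_nonneg_left (PadicInt.norm_le_one _) (norm_nonneg _)
    _ = _ := mul_one _

/-- term of the series -/
noncomputable def tm (k n : ℕ) : ℤ_[p] := (-1)^n * ((A k n : ℤ_[p]))

/-- the coefficient sequence of the solution -/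
noncomputable def csol (k : ℕ) : ℤ_[p] := ∑' n : ℕ, tm p k n

lemma norm_tm_le (k n : ℕ) : ‖tm p k n‖ ≤ ‖((n ! : ℤ_[p]))‖ := by
  rw [tm, norm_mul, norm_neg_one_pow, one_mul]
  exact norm_A_le p k n

lemma tendsto_tm (k : ℕ) : Tendsto (fun n : ℕ => tm p k n) atTop (𝓝 0) := by
  rw [tendsto_zero_iff_norm_tendsto_zero]
  exact squeeze_zero (fun n => norm_nonneg _) (fun n => norm_tm_le p k n) (norm_fac_tendsto p)

lemma summable_tm (k : ℕ) : Summable (fun n : ℕ => tm p k n) := by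
  apply NonarchimedeanAddGroup.summable_of_tendsto_cofinite_zero
  rw [Nat.cofinite_eq_atTop]
  exact tendsto_tm p k

lemma csol_key (k : ℕ) : csol p (k+1) * ((k : ℤ_[p]) + 1) + csol p k = 1 := by
  have hs1 : Summable (fun n => tm p (k+1) n * ((k : ℤ_[p]) + 1)) :=
    (summable_tm p (k+1)).mul_right _
  have hterm : ∀ n, tm p (k+1) n * ((k : ℤ_[p]) + 1) + tm p k n
      = (-1)^n * (((A k (n+1) : ℤ_[p])) + ((A k n : ℤ_[p]))) := by
    intro n
    have hcast : ((k : ℤ_[p]) + 1) * ((A (k+1) n : ℤ_[p])) = ((A k (n+1) : ℤ_[p])) := by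
      exact_mod_cast congrArg (Nat.cast : ℕ → ℤ_[p]) (A_succ k n)
    simp only [tm]
    rw [← hcast]; ring
  have hg : Summable (fun n => tm p (k+1) n * ((k : ℤ_[p]) + 1) + tm p k n) :=
    hs1.add (summable_tm p k)
  have hclosed : ∀ N : ℕ, ∑ n ∈ range N, (tm p (k+1) n * ((k : ℤ_[p]) + 1) + tm p k n)
      = 1 + (-1)^(N+1) * ((A k N : ℤ_[p])) := by
    intro N
    induction N with
    | zero => simp [A_zero]
    | succ N ih =>
      rw [Finset.sum_range_succ, ih, hterm N]
      ring
  have hlim : Tendsto (fun N => ∑ n ∈ range N, (tm p (k+1) n * ((k : ℤ_[p]) + 1) + tm p k n))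
      atTop (𝓝 1) := by
    refine Tendsto.congr (fun N => (hclosed N).symm) ?_
    have h0 : Tendsto (fun N : ℕ => (-1:ℤ_[p])^(N+1) * ((A k N : ℤ_[p]))) atTop (𝓝 0) := by
      rw [tendsto_zero_iff_norm_tendsto_zero]
      refine squeeze_zero (fun n => norm_nonneg _) (fun n => ?_) (norm_fac_tendsto p)
      rw [norm_mul, norm_neg_one_pow, one_mul]
      exact norm_A_le p k n
    have := tendsto_const_nhds (x := (1:ℤ_[p])) (f := atTop (α := ℕ)) |>.add h0
    simpa using this
  have htsum : ∑' n, (tm p (k+1) n * ((k : ℤ_[p]) + 1) + tm p k n) = 1 :=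
    tendsto_nhds_unique hg.hasSum.tendsto_sum_nat hlim
  calc csol p (k+1) * ((k : ℤ_[p]) + 1) + csol p k
      = (∑' n, tm p (k+1) n * ((k : ℤ_[p]) + 1)) + ∑' n, tm p k n := by
        rw [csol, csol, ← Summable.tsum_mul_right _ (summable_tm p (k+1))]
    _ = ∑' n, (tm p (k+1) n * ((k : ℤ_[p]) + 1) + tm p k n) :=
        (Summable.tsum_add hs1 (summable_tm p k)).symm
    _ = 1 := htsum

end aux

lemma padic_part (p : ℕ) [Fact p.Prime] : ∃! y : PowerSeries ℤ_[p],
    PowerSeries.derivativeFun y + y = PowerSeries.mk fun _ => (1 : ℤ_[p]) := by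
  refine ⟨PowerSeries.mk (csol p), ?_, ?_⟩
  · ext k
    rw [map_add, show ∀ f : PowerSeries ℤ_[p], f.derivativeFun = PowerSeries.derivative ℤ_[p] f from fun _ => rfl, PowerSeries.coeff_derivativeFun, PowerSeries.coeff_mk, PowerSeries.coeff_mk,
      PowerSeries.coeff_mk]
    push_cast
    exact csol_key p k
  · intro z hz
    set b : ℕ → ℤ_[p] := fun k => PowerSeries.coeff k z with hb
    have hkz : ∀ k : ℕ, b (k+1) * ((k : ℤ_[p])+1) + b k = 1 := by
      intro k
      have := congrArg (PowerSeries.coeff k) hz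
      rw [map_add, show ∀ f : PowerSeries ℤ_[p], f.derivativeFun = PowerSeries.derivative ℤ_[p] f from fun _ => rfl, PowerSeries.coeff_derivativeFun, PowerSeries.coeff_mk] at this
      push_cast at this
      exact this
    set d : ℕ → ℤ_[p] := fun k => b k - csol p k with hd
    have hrec : ∀ k : ℕ, d (k+1) * ((k : ℤ_[p])+1) + d k = 0 := by
      intro k
      simp only [hd]
      linear_combination hkz k - csol_key p k
    have hclaim : ∀ k : ℕ, d 0 = (-1)^k * ((k ! : ℤ_[p])) * d k := by
      intro k
      induction k with
      | zero => simp
      | succ k ih =>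
        have h1 : d k = -(d (k+1) * ((k : ℤ_[p])+1)) := by linear_combination hrec k
        rw [ih, h1]
        push_cast [Nat.factorial_succ]
        ring
    have hd0 : d 0 = 0 := by
      rw [← norm_le_zero_iff]
      refine ge_of_tendsto (norm_fac_tendsto p) (Filter.Eventually.of_forall fun k => ?_)
      rw [hclaim k, norm_mul, norm_mul, norm_neg_one_pow, one_mul]
      calc ‖(k ! : ℤ_[p])‖ * ‖d k‖ ≤ ‖(k ! : ℤ_[p])‖ * 1 :=
            mul_le_mul_of_nonneg_left (PadicInt.norm_le_one _) (norm_nonneg _)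
        _ = _ := mul_one _
    have hdk : ∀ k, d k = 0 := by
      intro k
      induction k with
      | zero => exact hd0
      | succ k ih =>
        have h1 := hrec k
        rw [ih, add_zero] at h1
        have h2 : ((k : ℤ_[p]) + 1) ≠ 0 := by
          exact_mod_cast Nat.cast_add_one_ne_zero (R := ℤ_[p]) k
        exact (mul_eq_zero.mp h1).resolve_right h2
    ext k
    have := hdk k
    simp only [hd, hb, sub_eq_zero] at this
    rw [this, PowerSeries.coeff_mk]


lemma no_int_solution :
    ¬ ∃ y : PowerSeries ℤ,
      PowerSeries.derivativeFun y + y = PowerSeries.mk fun _ => (1 : ℤ) := by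
  rintro ⟨y, hy⟩
  set a : ℕ → ℤ := fun k => PowerSeries.coeff k y with ha
  have hk : ∀ k : ℕ, a (k+1) * (k+1) + a k = 1 := by
    intro k
    have := congrArg (PowerSeries.coeff k) hy
    rwa [map_add, show ∀ f : PowerSeries ℤ, f.derivativeFun = PowerSeries.derivative ℤ f from fun _ => rfl, PowerSeries.coeff_derivativeFun, PowerSeries.coeff_mk] at this
  have key : ∀ N : ℕ, a 0 = (∑ n ∈ range N, (-1:ℤ)^n * n !) + (-1)^N * N ! * a N := by
    intro N
    induction N with
    | zero => simp
    | succ N ih =>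
      have h1 : a N = 1 - a (N+1) * (N+1) := by linarith [hk N]
      rw [ih, h1, Finset.sum_range_succ]
      push_cast [Nat.factorial_succ]
      ring
  have hsum : ∀ N : ℕ, ∑ n ∈ range (N+1), (n ! : ℤ) ≤ 2 * N ! := by
    intro N
    induction N with
    | zero => simp
    | succ N ih =>
      rcases Nat.eq_zero_or_pos N with rfl | hNpos
      · norm_num [Finset.sum_range_succ]
      rw [Finset.sum_range_succ]
      have hfc : (1:ℤ) ≤ N ! := by
        exact_mod_cast Nat.one_le_iff_ne_zero.mpr (Nat.factorial_ne_zero N)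
      have hN : (1:ℤ) ≤ N := by exact_mod_cast hNpos
      have h2 : 2 * (N ! : ℤ) ≤ (N+1)! := by
        push_cast [Nat.factorial_succ]
        nlinarith
      push_cast [Nat.factorial_succ] at *
      linarith
  have hSbound : ∀ N : ℕ, |∑ n ∈ range N, (-1:ℤ)^n * n !| ≤ ∑ n ∈ range N, (n ! : ℤ) := by
    intro N
    refine (Finset.abs_sum_le_sum_abs _ _).trans ?_
    apply Finset.sum_le_sum
    intro i _
    rw [abs_mul, abs_pow, abs_neg, abs_one, one_pow, one_mul]
    exact le_of_eq (abs_of_nonneg (by positivity))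
  have hzero : ∀ M : ℕ, (|a 0| + 3 : ℤ) ≤ M → a M = 0 := by
    intro M hM
    by_contra hne
    have h1 : (1:ℤ) ≤ |a M| := by
      rcases lt_or_ge (a M) 0 with h|h
      · rw [abs_of_neg h]; omega
      · rw [abs_of_nonneg h]; omega
    have hfacpos : (0:ℤ) < M ! := by exact_mod_cast Nat.factorial_pos M
    have h2 : |a 0 - ∑ n ∈ range M, (-1:ℤ)^n * n !| = M ! * |a M| := by
      rw [key M]
      have heq : (∑ n ∈ range M, (-1:ℤ)^n * n !) + (-1)^M * M ! * a M
          - ∑ n ∈ range M, (-1:ℤ)^n * n ! = (-1)^M * (M ! * a M) := by ring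
      rw [heq, abs_mul, abs_pow, abs_neg, abs_one, one_pow, one_mul, abs_mul]
      congr 1
      exact abs_of_nonneg (le_of_lt hfacpos)
    have h3 : (M ! : ℤ) ≤ |a 0 - ∑ n ∈ range M, (-1:ℤ)^n * n !| := by
      rw [h2]
      calc (M ! : ℤ) = M ! * 1 := (mul_one _).symm
        _ ≤ M ! * |a M| := mul_le_mul_of_nonneg_left h1 (le_of_lt hfacpos)
    obtain ⟨M', rfl⟩ : ∃ M', M = M' + 1 := ⟨M - 1, by have := abs_nonneg (a 0); omega⟩
    have h4 : |a 0 - ∑ n ∈ range (M'+1), (-1:ℤ)^n * n !| ≤ |a 0| + 2 * M' ! := by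
      calc |a 0 - ∑ n ∈ range (M'+1), (-1:ℤ)^n * n !|
          ≤ |a 0| + |∑ n ∈ range (M'+1), (-1:ℤ)^n * n !| := abs_sub _ _
        _ ≤ |a 0| + ∑ n ∈ range (M'+1), (n ! : ℤ) := by linarith [hSbound (M'+1)]
        _ ≤ |a 0| + 2 * M' ! := by linarith [hsum M']
    have h5 : ((M'+1)! : ℤ) = (M'+1) * M' ! := by push_cast [Nat.factorial_succ]; ring
    have h6 : (1:ℤ) ≤ M' ! := by
      exact_mod_cast Nat.one_le_iff_ne_zero.mpr (Nat.factorial_ne_zero M')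
    have h7 : (|a 0| + 3 : ℤ) ≤ (M' : ℤ) + 1 := by exact_mod_cast hM
    have h8 : (|a 0| + 1) * 1 ≤ ((M':ℤ) - 1) * M' ! :=
      mul_le_mul (by linarith) h6 zero_le_one (by linarith [abs_nonneg (a 0)])
    have h9 : ((M':ℤ)+1) * M' ! = ((M':ℤ)-1) * M' ! + 2 * M' ! := by ring
    linarith
  set M := |a 0|.toNat + 3 with hMdef
  have hM1 : (|a 0| + 3 : ℤ) ≤ M := by
    have := Int.toNat_of_nonneg (abs_nonneg (a 0))
    push_cast [hMdef]
    omega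
  have e1 : a M = 0 := hzero M hM1
  have e2 : a (M+1) = 0 := hzero (M+1) (by push_cast; push_cast at hM1; linarith)
  have := hk M
  rw [e1, e2] at this
  simp at this


/-- The equation `y' + y = 1 + x + x² + ...` has no solution in `ℤ⟦x⟧`, but for every
prime `p` it has a unique solution in `ℤ_p⟦x⟧`. -/
theorem geometric_nonhomogeneity_example :
    (¬ ∃ y : PowerSeries ℤ,
      PowerSeries.derivativeFun y + y = PowerSeries.mk fun _ => (1 : ℤ)) ∧
    (∀ (p : ℕ) [Fact p.Prime], ∃! y : PowerSeries ℤ_[p],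
      PowerSeries.derivativeFun y + y = PowerSeries.mk fun _ => (1 : ℤ_[p])) := by
  exact ⟨no_int_solution, fun p _ => padic_part p⟩
end

section
/- Let K be a commutative ring, a_0, ..., a_m ∈ K with a_0 invertible, and (c_k) the coefficients of (a_m t^m + ... + a_0)^{-1} in K[[t]]. Then the formal Laurent series E(x) = Σ_{k≥0} c_k (-1)^k k! x^{-k-1} is the unique element of (1/x)K[[1/x]] satisfying a_m E^{(m)} + ... + a_1 E' + a_0 E = 1/x. -/
/-- Formal derivative on Laurent series in `1/x`; `w n` is the coefficient of `x^{-(n+1)}`. -/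
noncomputable def laurentDeriv (K : Type*) [CommRing K] (w : ℕ → K) : ℕ → K :=
  fun j => match j with
  | 0 => 0
  | n + 1 => -((n + 1 : ℕ) : K) * w n

lemma laurentDeriv_iterate (K : Type*) [CommRing K] (i : ℕ) (w : ℕ → K) (j : ℕ) :
    (laurentDeriv K)^[i] w j =
      if i ≤ j then (-1) ^ i * ((j.descFactorial i : ℕ) : K) * w (j - i) else 0 := by
  induction i generalizing j with
  | zero => simp
  | succ i ih =>
    rw [Function.iterate_succ_apply']
    cases j with
    | zero =>
      simp [laurentDeriv]
    | succ n =>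
      show -((n + 1 : ℕ) : K) * (laurentDeriv K)^[i] w n = _
      rw [ih n]
      by_cases h : i ≤ n
      · rw [if_pos h, if_pos (Nat.succ_le_succ h), Nat.succ_descFactorial_succ,
          Nat.succ_sub_succ]
        push_cast
        ring
      · rw [if_neg h, if_neg (by omega), mul_zero]

lemma coeff_lemma (K : Type*) [CommRing K] (m : ℕ) (a : ℕ → K) (c : ℕ → K)
    (hc : PowerSeries.mk c *
      (∑ i ∈ Finset.range (m + 1), PowerSeries.monomial i (a i)) = 1) (j : ℕ) :
    ∑ i ∈ Finset.range (m + 1), (if i ≤ j then a i * c (j - i) else 0) =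
      if j = 0 then 1 else 0 := by
  rw [mul_comm] at hc
  have h := congrArg (PowerSeries.coeff j) hc
  rw [PowerSeries.coeff_mul, PowerSeries.coeff_one,
    Finset.Nat.sum_antidiagonal_eq_sum_range_succ_mk] at h
  simp only [map_sum, PowerSeries.coeff_monomial, PowerSeries.coeff_mk,
    Finset.sum_ite_eq, Finset.mem_range] at h
  -- h : ∑ i ∈ range (j+1), (if i < m + 1 then a i else 0) * c (j - i) = if j = 0 then 1 else 0
  rw [← h]
  set f : ℕ → K := fun i => if i ≤ j ∧ i ≤ m then a i * c (j - i) else 0 with hf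
  have h1 : ∑ i ∈ Finset.range (m + 1), (if i ≤ j then a i * c (j - i) else 0) =
      ∑ i ∈ Finset.range (m + 1), f i := by
    refine Finset.sum_congr rfl fun i hi => ?_
    simp only [Finset.mem_range] at hi
    have him : i ≤ m := by omega
    simp [hf, him]
  have h2 : ∑ i ∈ Finset.range (j + 1), (if i < m + 1 then a i else 0) * c (j - i) =
      ∑ i ∈ Finset.range (j + 1), f i := by
    refine Finset.sum_congr rfl fun i hi => ?_
    simp only [Finset.mem_range] at hi
    have hij : i ≤ j := by omega
    by_cases him : i ≤ m
    · simp [hf, him, hij, Nat.lt_succ_iff]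
    · simp [hf, him, Nat.lt_succ_iff]
  have h3 : ∑ i ∈ Finset.range (m + 1), f i = ∑ i ∈ Finset.range (m + j + 2), f i := by
    refine Finset.sum_subset (by intro x hx; simp at *; omega) fun x _ hx => ?_
    simp only [Finset.mem_range] at hx
    simp [hf]; omega
  have h4 : ∑ i ∈ Finset.range (j + 1), f i = ∑ i ∈ Finset.range (m + j + 2), f i := by
    refine Finset.sum_subset (by intro x hx; simp at *; omega) fun x _ hx => ?_
    simp only [Finset.mem_range] at hx
    simp [hf]; omega
  rw [h1, h2, h3, h4]

/-- With `c` the coefficients of `(a_m t^m + ... + a_0)⁻¹` (`a 0` invertible), the Laurent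
series `E(x) = ∑_k c_k (-1)^k k! x^{-k-1}` is the unique element of `(1/x)K[[1/x]]`
satisfying `a_m E^{(m)} + ... + a_1 E' + a_0 E = 1/x`. -/
theorem fundamental_solution_laurent (K : Type*) [CommRing K] (m : ℕ) (a : ℕ → K)
    (h0 : IsUnit (a 0)) (c : ℕ → K)
    (hc : PowerSeries.mk c *
      (∑ i ∈ Finset.range (m + 1), PowerSeries.monomial i (a i)) = 1) :
    (∑ i ∈ Finset.range (m + 1), a i •
        ((laurentDeriv K)^[i] (fun k => c k * (-1) ^ k * (Nat.factorial k : K)))) =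
      (fun j => if j = 0 then (1 : K) else 0) ∧
    ∀ w : ℕ → K,
      (∑ i ∈ Finset.range (m + 1), a i • ((laurentDeriv K)^[i] w)) =
        (fun j => if j = 0 then (1 : K) else 0) →
      w = fun k => c k * (-1) ^ k * (Nat.factorial k : K) := by
  set E : ℕ → K := fun k => c k * (-1) ^ k * (Nat.factorial k : K) with hEdef
  -- value of iterated derivative of E
  have hDE : ∀ i j, (laurentDeriv K)^[i] E j =
      if i ≤ j then (-1) ^ j * ((Nat.factorial j : ℕ) : K) * c (j - i) else 0 := by
    intro i j
    rw [laurentDeriv_iterate]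
    by_cases h : i ≤ j
    · rw [if_pos h, if_pos h, hEdef]
      have hfac : ((j - i).factorial * j.descFactorial i : ℕ) = j.factorial :=
        Nat.factorial_mul_descFactorial h
      have hsign : ((-1 : K)) ^ i * (-1) ^ (j - i) = (-1) ^ j := by
        rw [← pow_add]
        congr 1
        omega
      calc (-1 : K) ^ i * (j.descFactorial i : K) * (c (j - i) * (-1) ^ (j - i) *
              ((j - i).factorial : K))
          = ((-1 : K) ^ i * (-1) ^ (j - i)) * (((j - i).factorial * j.descFactorial i : ℕ) : K)
              * c (j - i) := by push_cast; ring
        _ = (-1) ^ j * ((j.factorial : ℕ) : K) * c (j - i) := by rw [hsign, hfac]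
    · rw [if_neg h, if_neg h]
  have hE : (∑ i ∈ Finset.range (m + 1), a i • ((laurentDeriv K)^[i] E)) =
      (fun j => if j = 0 then (1 : K) else 0) := by
    funext j
    rw [Finset.sum_apply]
    simp only [Pi.smul_apply, smul_eq_mul]
    have : ∀ i ∈ Finset.range (m + 1), a i * (laurentDeriv K)^[i] E j =
        (-1) ^ j * ((Nat.factorial j : ℕ) : K) * (if i ≤ j then a i * c (j - i) else 0) := by
      intro i _
      rw [hDE]
      by_cases h : i ≤ j
      · rw [if_pos h, if_pos h]; ring
      · rw [if_neg h, if_neg h]; ring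
    rw [Finset.sum_congr rfl this, ← Finset.mul_sum, coeff_lemma K m a c hc j]
    by_cases hj : j = 0
    · subst hj; simp
    · simp [hj]
  refine ⟨hE, fun w hw => ?_⟩
  funext j
  induction j using Nat.strong_induction_on with
  | _ j ih =>
    have hwj := congrFun hw j
    have hEj := congrFun hE j
    rw [Finset.sum_apply] at hwj hEj
    simp only [Pi.smul_apply, smul_eq_mul] at hwj hEj
    rw [Finset.sum_range_succ'] at hwj hEj
    simp only [Function.iterate_zero, id_eq] at hwj hEj
    have hsame : ∀ i ∈ Finset.range m,
        a (i + 1) * (laurentDeriv K)^[i + 1] w j = a (i + 1) * (laurentDeriv K)^[i + 1] E j := by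
      intro i _
      rw [laurentDeriv_iterate, laurentDeriv_iterate]
      by_cases h : i + 1 ≤ j
      · rw [if_pos h, if_pos h, ih (j - (i + 1)) (by omega)]
      · rw [if_neg h, if_neg h]
    rw [Finset.sum_congr rfl hsame] at hwj
    have : a 0 * w j = a 0 * E j := by
      have := hwj.trans hEj.symm
      exact add_left_cancel this
    exact h0.mul_left_cancel this
end
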